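/- For every real x > 0 and every real c > 0, the inverse Mellin integral (1/(2π)) ∫_{−∞}^{∞} Γ(c + it) · (1 − 2^{−(c+it)}) · ζ(1 + c + it) · x^{−(c+it)} dt converges absolutely and equals log(1 + e^{−x}), where Γ is the complex Gamma function and ζ is the Riemann zeta function. -/

import Mathlib

open MeasureTheory Complex Filter

namespace Stmt8Aux

open Set Function

noncomputable def flog : ℝ → ℂ := fun t => ((Real.log (1 + Real.exp (-t)) : ℝ) : ℂ)

lemma hasSum_eta {z : ℂ} (hz : 1 < z.re) :
    HasSum (fun n : ℕ => (-1) ^ n * ((n : ℂ) + 1) ^ (-z))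
      ((1 - 2 ^ (1 - z)) * riemannZeta z) := by
  have hsumm : Summable (fun n : ℕ => ((n : ℂ) + 1) ^ (-z)) := by
    have := Complex.summable_one_div_nat_cpow.mpr hz
    rw [← summable_nat_add_iff 1] at this
    refine this.congr fun n => ?_
    rw [one_div, ← cpow_neg]
    push_cast
    ring_nf
  have hζ : HasSum (fun n : ℕ => ((n : ℂ) + 1) ^ (-z)) (riemannZeta z) := by
    have h := zeta_eq_tsum_one_div_nat_add_one_cpow hz
    have heq : (∑' n : ℕ, 1 / ((n : ℂ) + 1) ^ z) = ∑' n : ℕ, ((n : ℂ) + 1) ^ (-z) := by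
      refine tsum_congr fun n => ?_
      rw [one_div, cpow_neg]
    rw [heq] at h
    exact h ▸ hsumm.hasSum
  set g : ℕ → ℂ := fun n => ((n : ℂ) + 1) ^ (-z) - (-1) ^ n * ((n : ℂ) + 1) ^ (-z) with hg_def
  have hi : Injective (fun k : ℕ => 2 * k + 1) := fun a b h => by simpa using h
  have hzero : ∀ n ∉ Set.range (fun k : ℕ => 2 * k + 1), g n = 0 := by
    intro n hn
    have hev : Even n := by
      rcases Nat.even_or_odd n with h | h
      · exact h
      · obtain ⟨m, hm⟩ := h
        exact absurd ⟨m, by simp [hm]⟩ hn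
    simp [hg_def, hev.neg_one_pow]
  have hcomp : (g ∘ fun k : ℕ => 2 * k + 1) = fun k : ℕ => 2 ^ (1 - z) * ((k : ℂ) + 1) ^ (-z) := by
    funext k
    have h2 : (-1 : ℂ) ^ (2 * k + 1) = -1 := Odd.neg_one_pow ⟨k, by ring⟩
    have key : ((2 * k + 1 : ℕ) : ℂ) + 1 = (((2 : ℝ) * (k + 1 : ℝ) : ℝ) : ℂ) := by
      push_cast; ring
    have h3 : ((((2 : ℝ) * (k + 1 : ℝ) : ℝ)) : ℂ) ^ (-z)
        = (((2 : ℝ)) : ℂ) ^ (-z) * (((k + 1 : ℝ)) : ℂ) ^ (-z) := by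
      rw [Complex.ofReal_mul]
      exact mul_cpow_ofReal_nonneg (by norm_num : (0:ℝ) ≤ 2)
        (by positivity : (0:ℝ) ≤ (k:ℝ)+1) (-z)
    have h4 : (2 : ℂ) ^ (1 - z) = 2 * (2 : ℂ) ^ (-z) := by
      rw [show (1 : ℂ) - z = 1 + (-z) by ring, cpow_add _ _ (by norm_num), cpow_one]
    simp only [comp_apply, hg_def, h2, key, h3, h4]
    push_cast
    ring
  have hg : HasSum g (2 ^ (1 - z) * riemannZeta z) := by
    rw [← hi.hasSum_iff hzero, hcomp]
    exact hζ.mul_left _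
  have hsub := hζ.sub hg
  have heq : (fun n : ℕ => ((n : ℂ) + 1) ^ (-z) - g n)
      = fun n : ℕ => (-1) ^ n * ((n : ℂ) + 1) ^ (-z) := by
    funext n; simp [hg_def]
  rw [heq] at hsub
  convert hsub using 1
  · rfl
  ring

lemma flog_hasSum {t : ℝ} (ht : 0 < t) :
    HasSum (fun n : ℕ => ((-1) ^ n / ((n : ℂ) + 1)) * ((Real.exp (-(((n : ℝ) + 1)) * t) : ℝ) : ℂ))
      (flog t) := by
  have hlt : |(-Real.exp (-t))| < 1 := by
    rw [abs_neg, abs_of_pos (Real.exp_pos _)]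
    exact Real.exp_lt_one_iff.mpr (by linarith)
  have h := (Real.hasSum_pow_div_log_of_abs_lt_one hlt).neg
  have heq : (fun n : ℕ => -((-Real.exp (-t)) ^ (n + 1) / (n + 1)))
      = fun n : ℕ => ((-1) ^ n / ((n : ℝ) + 1)) * Real.exp (-((n : ℝ) + 1) * t) := by
    funext n
    rw [neg_pow, ← Real.exp_nat_mul]
    push_cast
    rw [pow_succ]
    ring_nf
  rw [heq] at h
  have hval : - -Real.log (1 - -Real.exp (-t)) = Real.log (1 + Real.exp (-t)) := by
    rw [neg_neg, sub_neg_eq_add]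
  rw [hval] at h
  have := Complex.hasSum_ofReal.mpr h
  refine this.congr_fun fun n => ?_
  push_cast
  ring

lemma mellin_flog {s : ℂ} (hs : 0 < s.re) :
    mellin flog s = Complex.Gamma s * (1 - 2 ^ (-s)) * riemannZeta (s + 1) := by
  have hsum : HasSum (fun n : ℕ => Complex.Gamma s * ((-1) ^ n / ((n : ℂ) + 1))
      / (((n : ℝ) + 1 : ℝ) : ℂ) ^ s) (mellin flog s) := by
    refine hasSum_mellin (fun n => Or.inr (by positivity)) hs
      (fun t ht => flog_hasSum ht) ?_
    refine Summable.congr (f := fun n : ℕ => 1 / ((n : ℝ) + 1) ^ (s.re + 1)) ?_ fun n => ?_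
    · have : Summable (fun n : ℕ => 1 / ((n : ℝ) + 1) ^ (s.re + 1)) := by
        have := (Real.summable_one_div_nat_rpow (p := s.re + 1)).mpr (by linarith)
        rw [← summable_nat_add_iff 1] at this
        exact this.congr fun n => by push_cast; ring_nf
      exact this
    · have hn : (0:ℝ) < (n:ℝ) + 1 := by positivity
      have hnorm : ‖(-1 : ℂ) ^ n / ((n : ℂ) + 1)‖ = 1 / ((n:ℝ)+1) := by
        rw [norm_div, norm_pow, norm_neg, norm_one, one_pow,
          show ((n:ℂ)+1) = (((n:ℝ)+1 : ℝ):ℂ) by push_cast; ring, Complex.norm_real,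
          Real.norm_of_nonneg hn.le]
      show (1:ℝ) / ((n:ℝ) + 1) ^ (s.re + 1) = _
      rw [hnorm, Real.rpow_add hn, Real.rpow_one]
      field_simp
  have h2 : HasSum (fun n : ℕ => Complex.Gamma s * ((-1) ^ n * ((n : ℂ) + 1) ^ (-(s+1))))
      (Complex.Gamma s * ((1 - 2 ^ (1 - (s+1))) * riemannZeta (s+1))) :=
    (hasSum_eta (by rw [Complex.add_re, Complex.one_re]; linarith)).mul_left _
  have hfeq : (fun n : ℕ => Complex.Gamma s * ((-1) ^ n * ((n : ℂ) + 1) ^ (-(s+1))))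
      = fun n : ℕ => Complex.Gamma s * ((-1) ^ n / ((n : ℂ) + 1)) / (((n : ℝ) + 1 : ℝ) : ℂ) ^ s := by
    funext n
    have h0 : ((n : ℂ) + 1) ≠ 0 := by
      intro h
      have := congrArg Complex.re h
      simp at this
      linarith [Nat.cast_nonneg (α := ℝ) n]
    have hcast : ((((n : ℝ) + 1) : ℝ) : ℂ) = (n : ℂ) + 1 := by push_cast; ring
    rw [hcast, cpow_neg, cpow_add _ _ h0, cpow_one]
    have hs0 : ((n : ℂ) + 1) ^ s ≠ 0 := by
      rw [Ne, cpow_eq_zero_iff]; tauto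
    field_simp
  rw [hfeq] at h2
  rw [hsum.unique h2, show (1 : ℂ) - (s + 1) = -s by ring]
  ring

lemma norm_Gamma_le {s : ℂ} (hs : 0 < s.re) : ‖Complex.Gamma s‖ ≤ Real.Gamma s.re := by
  rw [Complex.Gamma_eq_integral hs, Complex.GammaIntegral, Real.Gamma_eq_integral hs]
  refine (norm_integral_le_integral_norm _).trans_eq ?_
  refine setIntegral_congr_fun measurableSet_Ioi fun t ht => ?_
  rw [norm_mul, Complex.norm_real, Real.norm_of_nonneg (Real.exp_pos _).le,
    Complex.norm_cpow_eq_rpow_re_of_pos ht]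
  simp [Complex.sub_re]

lemma norm_zeta_le {z : ℂ} (hz : 1 < z.re) :
    ‖riemannZeta z‖ ≤ ∑' n : ℕ, ((n : ℝ) + 1) ^ (-z.re) := by
  rw [zeta_eq_tsum_one_div_nat_add_one_cpow hz]
  have hterm : ∀ n : ℕ, ‖1 / ((n : ℂ) + 1) ^ z‖ = ((n : ℝ) + 1) ^ (-z.re) := by
    intro n
    have hn : (0:ℝ) < (n:ℝ) + 1 := by positivity
    rw [norm_div, norm_one, show ((n:ℂ)+1) = (((n:ℝ)+1 : ℝ):ℂ) by push_cast; ring,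
      Complex.norm_cpow_eq_rpow_re_of_pos hn, one_div,
      ← Real.rpow_neg_one, ← Real.rpow_mul hn.le]
    ring_nf
  have hsumm : Summable fun n : ℕ => ((n : ℝ) + 1) ^ (-z.re) := by
    have := (Real.summable_one_div_nat_rpow (p := z.re)).mpr hz
    rw [← summable_nat_add_iff 1] at this
    exact this.congr fun n => by
      rw [one_div, ← Real.rpow_neg (by positivity)]; push_cast; ring_nf
  calc ‖∑' n : ℕ, 1 / ((n : ℂ) + 1) ^ z‖ ≤ ∑' n : ℕ, ‖1 / ((n : ℂ) + 1) ^ z‖ :=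
        norm_tsum_le_tsum_norm (by simpa only [hterm] using hsumm)
    _ = _ := tsum_congr hterm

lemma vert_integrable (x c : ℝ) (hx : 0 < x) (hc : 0 < c) :
    Integrable (fun t : ℝ =>
      Complex.Gamma ((c : ℂ) + (t : ℂ) * Complex.I) *
        (1 - (2 : ℂ) ^ (-((c : ℂ) + (t : ℂ) * Complex.I))) *
        riemannZeta (1 + (c : ℂ) + (t : ℂ) * Complex.I) *
        (x : ℂ) ^ (-((c : ℂ) + (t : ℂ) * Complex.I))) := by
  have hsre : ∀ t : ℝ, ((c : ℂ) + (t : ℂ) * Complex.I).re = c := by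
    intro t; simp
  set ZB : ℝ := ∑' n : ℕ, ((n : ℝ) + 1) ^ (-(1 + c)) with hZB
  have hZB0 : 0 ≤ ZB := tsum_nonneg fun n => Real.rpow_nonneg (by positivity) _
  set K : ℝ := Real.Gamma (c + 2) * (1 + 2 ^ (-c)) * ZB * x ^ (-c) with hK
  -- measurability via continuity
  have hline : Continuous fun t : ℝ => (c : ℂ) + (t : ℂ) * Complex.I :=
    continuous_const.add (Complex.continuous_ofReal.mul continuous_const)
  have hmeas : Continuous (fun t : ℝ =>
      Complex.Gamma ((c : ℂ) + (t : ℂ) * Complex.I) *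
        (1 - (2 : ℂ) ^ (-((c : ℂ) + (t : ℂ) * Complex.I))) *
        riemannZeta (1 + (c : ℂ) + (t : ℂ) * Complex.I) *
        (x : ℂ) ^ (-((c : ℂ) + (t : ℂ) * Complex.I))) := by
    refine (((?_ : Continuous _).mul ?_).mul ?_).mul ?_
    · rw [continuous_iff_continuousAt]
      intro t
      refine (Complex.differentiableAt_Gamma _ fun m => ?_).continuousAt.comp
        hline.continuousAt
      intro h
      have := congrArg Complex.re h
      rw [hsre] at this
      simp at this
      nlinarith [Nat.cast_nonneg (α := ℝ) m]
    · exact continuous_const.sub ((continuous_const.cpow hline.neg) (fun _ => Or.inl (by norm_num)))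
    · have hline2 : Continuous fun t : ℝ => (1 : ℂ) + (c : ℂ) + (t : ℂ) * Complex.I :=
        continuous_const.add (Complex.continuous_ofReal.mul continuous_const)
      rw [continuous_iff_continuousAt]
      intro t
      refine (differentiableAt_riemannZeta ?_).continuousAt.comp hline2.continuousAt
      intro h
      have := congrArg Complex.re h
      simp at this
      linarith
    · exact (continuous_const.cpow hline.neg)
        (fun _ => Or.inl (by simpa using hx))
  -- dominating function
  have hdom : Integrable (fun t : ℝ => K * (c ^ 2 + t ^ 2)⁻¹) := by
    have h1 : Integrable (fun t : ℝ => (1 + (t / c) ^ 2)⁻¹) :=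
      integrable_inv_one_add_sq.comp_div hc.ne'
    have h2 := h1.const_mul (K / c ^ 2)
    refine h2.congr (Filter.Eventually.of_forall fun t => ?_)
    show K / c ^ 2 * (1 + (t / c) ^ 2)⁻¹ = K * (c ^ 2 + t ^ 2)⁻¹
    have hc2 : c ^ 2 ≠ 0 := by positivity
    field_simp
  refine hdom.mono' hmeas.aestronglyMeasurable (Filter.Eventually.of_forall fun t => ?_)
  set s : ℂ := (c : ℂ) + (t : ℂ) * Complex.I with hs_def
  have hs_re : s.re = c := hsre t
  have hs0 : s ≠ 0 := fun h => by rw [← hs_re] at hc; rw [h] at hc; simp at hc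
  have hs1 : s + 1 ≠ 0 := fun h => by
    have := congrArg Complex.re h
    rw [Complex.add_re, hs_re, Complex.one_re, Complex.zero_re] at this
    linarith
  -- Gamma bound
  have hG : ‖Complex.Gamma s‖ ≤ Real.Gamma (c + 2) * (c ^ 2 + t ^ 2)⁻¹ := by
    have hgr : Complex.Gamma (s + 2) = (s + 1) * (s * Complex.Gamma s) := by
      rw [show s + 2 = (s + 1) + 1 by ring, Complex.Gamma_add_one _ hs1,
        Complex.Gamma_add_one _ hs0]
    have hb : ‖Complex.Gamma (s + 2)‖ ≤ Real.Gamma (c + 2) := by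
      have := norm_Gamma_le (s := s + 2) (by simp [hs_re]; linarith)
      simpa [hs_re] using this
    rw [hgr] at hb
    have him : s.im = t := by simp [hs_def]
    have habs : ‖s‖ * ‖s‖ = c ^ 2 + t ^ 2 := by
      have h := Complex.sq_norm s
      rw [Complex.normSq_apply, hs_re, him] at h
      nlinarith [h]
    have hle : ‖s‖ ≤ ‖s + 1‖ := by
      have h1 := Complex.sq_norm s
      have h2 := Complex.sq_norm (s + 1)
      rw [Complex.normSq_apply, hs_re, him] at h1
      rw [Complex.normSq_apply, Complex.add_re, Complex.add_im, hs_re, him,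
        Complex.one_re, Complex.one_im] at h2
      nlinarith [norm_nonneg s, norm_nonneg (s + 1)]
    have hpos : (0:ℝ) < c ^ 2 + t ^ 2 := by positivity
    have key : (c ^ 2 + t ^ 2) * ‖Complex.Gamma s‖ ≤ Real.Gamma (c + 2) := by
      calc (c ^ 2 + t ^ 2) * ‖Complex.Gamma s‖ = ‖s‖ * ‖s‖ * ‖Complex.Gamma s‖ := by
            rw [habs]
        _ ≤ ‖s + 1‖ * (‖s‖ * ‖Complex.Gamma s‖) := by
            rw [← mul_assoc]
            gcongr
        _ = ‖(s + 1) * (s * Complex.Gamma s)‖ := by rw [norm_mul, norm_mul]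
        _ ≤ Real.Gamma (c + 2) := hb
    rw [mul_comm] at key
    exact ((le_div_iff₀ hpos).mpr key).trans_eq (div_eq_mul_inv _ _)
  have h2b : ‖1 - (2:ℂ) ^ (-s)‖ ≤ 1 + 2 ^ (-c) := by
    refine (norm_sub_le _ _).trans ?_
    rw [norm_one]
    gcongr
    rw [show (2:ℂ) = ((2:ℝ):ℂ) by norm_num,
      Complex.norm_cpow_eq_rpow_re_of_pos (by norm_num)]
    simp [hs_re]
  have hζb : ‖riemannZeta (1 + (c:ℂ) + (t:ℂ) * Complex.I)‖ ≤ ZB := by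
    have hre : (1 + (c:ℂ) + (t:ℂ) * Complex.I).re = 1 + c := by simp
    have := norm_zeta_le (z := 1 + (c:ℂ) + (t:ℂ) * Complex.I) (by rw [hre]; linarith)
    rwa [hre] at this
  have hxb : ‖(x:ℂ) ^ (-s)‖ = x ^ (-c) := by
    rw [Complex.norm_cpow_eq_rpow_re_of_pos hx]
    simp [hs_re]
  calc ‖Complex.Gamma s * (1 - (2:ℂ) ^ (-s)) * riemannZeta (1 + (c:ℂ) + (t:ℂ) * Complex.I)
        * (x:ℂ) ^ (-s)‖
      = ‖Complex.Gamma s‖ * ‖1 - (2:ℂ) ^ (-s)‖ *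
        ‖riemannZeta (1 + (c:ℂ) + (t:ℂ) * Complex.I)‖ * ‖(x:ℂ) ^ (-s)‖ := by
        rw [norm_mul, norm_mul, norm_mul]
    _ ≤ (Real.Gamma (c + 2) * (c ^ 2 + t ^ 2)⁻¹) * (1 + 2 ^ (-c)) * ZB * x ^ (-c) := by
        gcongr <;> first
          | exact norm_nonneg _
          | positivity
          | assumption
          | exact hxb.le
    _ = K * (c ^ 2 + t ^ 2)⁻¹ := by rw [hK]; ring


end Stmt8Aux

open Stmt8Aux Set in
theorem stmt8 (x c : ℝ) (hx : 0 < x) (hc : 0 < c) :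
    Integrable (fun t : ℝ =>
      Complex.Gamma ((c : ℂ) + (t : ℂ) * Complex.I) *
        (1 - (2 : ℂ) ^ (-((c : ℂ) + (t : ℂ) * Complex.I))) *
        riemannZeta (1 + (c : ℂ) + (t : ℂ) * Complex.I) *
        (x : ℂ) ^ (-((c : ℂ) + (t : ℂ) * Complex.I))) ∧
    (1 / (2 * (Real.pi : ℂ))) *
        ∫ t : ℝ, Complex.Gamma ((c : ℂ) + (t : ℂ) * Complex.I) *
          (1 - (2 : ℂ) ^ (-((c : ℂ) + (t : ℂ) * Complex.I))) *
          riemannZeta (1 + (c : ℂ) + (t : ℂ) * Complex.I) *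
          (x : ℂ) ^ (-((c : ℂ) + (t : ℂ) * Complex.I))
      = (Real.log (1 + Real.exp (-x)) : ℂ) := by
  refine ⟨vert_integrable x c hx hc, ?_⟩
  -- pointwise identification of the integrand with `x^{-s} • mellin flog s`
  have hpt : ∀ t : ℝ, (x : ℂ) ^ (-((c : ℂ) + (t : ℂ) * Complex.I)) •
        mellin flog ((c : ℂ) + (t : ℂ) * Complex.I)
      = Complex.Gamma ((c : ℂ) + (t : ℂ) * Complex.I) *
        (1 - (2 : ℂ) ^ (-((c : ℂ) + (t : ℂ) * Complex.I))) *
        riemannZeta (1 + (c : ℂ) + (t : ℂ) * Complex.I) *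
        (x : ℂ) ^ (-((c : ℂ) + (t : ℂ) * Complex.I)) := by
    intro t
    rw [mellin_flog (by simp [hc] : 0 < ((c : ℂ) + (t : ℂ) * Complex.I).re),
      show ((c : ℂ) + (t : ℂ) * Complex.I) + 1 = 1 + (c : ℂ) + (t : ℂ) * Complex.I by ring,
      smul_eq_mul]
    ring
  have hflogcont : Continuous flog := by
    have h3 : Continuous fun u : ℝ => Real.log (1 + Real.exp (-u)) :=
      Continuous.log (by fun_prop) (fun u => by positivity)
    exact Complex.continuous_ofReal.comp h3
  -- Mellin convergence of flog at c
  have hmc : MellinConvergent flog (c : ℂ) := by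
    refine Integrable.mono' (Real.GammaIntegral_convergent hc) ?_ ?_
    · refine ContinuousOn.aestronglyMeasurable ?_ measurableSet_Ioi
      refine ContinuousOn.smul (f := fun t : ℝ => (t : ℂ) ^ ((c : ℂ) - 1)) ?_ hflogcont.continuousOn
      apply continuousOn_of_forall_continuousAt
      intro t ht
      exact (continuousAt_cpow_const (Complex.ofReal_mem_slitPlane.2 ht)).comp
        Complex.continuous_ofReal.continuousAt
    · rw [ae_restrict_iff' measurableSet_Ioi]
      filter_upwards with t ht
      have h0 : (0:ℝ) < Real.exp (-t) := Real.exp_pos _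
      have hlog0 : 0 ≤ Real.log (1 + Real.exp (-t)) := Real.log_nonneg (by linarith)
      have hlog1 : Real.log (1 + Real.exp (-t)) ≤ Real.exp (-t) := by
        have := Real.log_le_sub_one_of_pos (by linarith : (0:ℝ) < 1 + Real.exp (-t))
        linarith
      rw [norm_smul,
        Complex.norm_cpow_eq_rpow_re_of_pos ht]
      simp only [flog]
      rw [Complex.norm_real, Real.norm_of_nonneg hlog0]
      calc t ^ ((c:ℂ) - 1).re * Real.log (1 + Real.exp (-t))
          ≤ t ^ ((c:ℂ) - 1).re * Real.exp (-t) :=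
            mul_le_mul_of_nonneg_left hlog1 (Real.rpow_nonneg (le_of_lt ht) _)
        _ = Real.exp (-t) * t ^ (c - 1) := by
            rw [mul_comm]
            norm_num
  -- vertical integrability of the Mellin transform
  have hvi : Complex.VerticalIntegrable (mellin flog) c := by
    refine (vert_integrable 1 c one_pos hc).congr
      (Filter.Eventually.of_forall fun y => ?_)
    show _ = mellin flog ((c : ℂ) + (y : ℂ) * Complex.I)
    rw [mellin_flog (by simp [hc] : 0 < ((c : ℂ) + (y : ℂ) * Complex.I).re),
      show ((c : ℂ) + (y : ℂ) * Complex.I) + 1 = 1 + (c : ℂ) + (y : ℂ) * Complex.I by ring]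
    simp
  -- continuity of flog at x and Mellin inversion
  have key := mellinInv_mellin_eq c flog hx hmc hvi hflogcont.continuousAt
  rw [mellinInv] at key
  have hint : (∫ y : ℝ, (x : ℂ) ^ (-((c : ℂ) + (y : ℂ) * Complex.I)) •
      mellin flog ((c : ℂ) + (y : ℂ) * Complex.I))
      = ∫ t : ℝ, Complex.Gamma ((c : ℂ) + (t : ℂ) * Complex.I) *
          (1 - (2 : ℂ) ^ (-((c : ℂ) + (t : ℂ) * Complex.I))) *
          riemannZeta (1 + (c : ℂ) + (t : ℂ) * Complex.I) *
          (x : ℂ) ^ (-((c : ℂ) + (t : ℂ) * Complex.I)) :=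
    integral_congr_ae (Filter.Eventually.of_forall fun t => hpt t)
  rw [hint, Complex.real_smul] at key
  rw [show ((Real.log (1 + Real.exp (-x)) : ℝ) : ℂ) = flog x from rfl, ← key]
  push_cast
  ring
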